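/- Let G be a connected graph on n ≥ 2 vertices. For a real number α, let (^α m)_i = (Σ_{j∼i} d_jᵅ)/d_iᵅ be the generalized average degrees, assumed ordered (^α m)₁ ≥ ... ≥ (^α m)_n, and let N = max_{i∼j} d_jᵅ/d_iᵅ. Then for each 1 ≤ i ≤ n, ρ(A(G)) ≤ ((^α m)_i − N + √(((^α m)_i + N)² + 4N·Σ_{k=1}^{i−1}((^α m)_k − (^α m)_i)))/2. -/

import Mathlib

open Matrix Finset Real

/-- Spectral radius: largest modulus of a complex eigenvalue (root of the
characteristic polynomial). -/
noncomputable def specRad {n : ℕ} (A : Matrix (Fin n) (Fin n) ℝ) : ℝ :=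
  (((A.map (Complex.ofReal)).charpoly.roots).map (fun z => ‖z‖)).foldr max 0

/-- Irreducibility of a nonnegative matrix. -/
def Irred {n : ℕ} (A : Matrix (Fin n) (Fin n) ℝ) : Prop :=
  ∀ i j : Fin n, ∃ k : ℕ, 0 < (A ^ k) i j

section helpers
open Polynomial

private lemma exists_eigenvec {n : ℕ} (M : Matrix (Fin n) (Fin n) ℂ) {μ : ℂ}
    (h : μ ∈ M.charpoly.roots) : ∃ v : Fin n → ℂ, v ≠ 0 ∧ M.mulVec v = μ • v := by
  have hroot : M.charpoly.IsRoot μ :=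
    (Polynomial.mem_roots (M.charpoly_monic.ne_zero)).mp h
  have hdet : (μ • (1 : Matrix (Fin n) (Fin n) ℂ) - M).det = 0 := by
    rw [Matrix.charpoly, Polynomial.IsRoot, eval_det, matPolyEquiv_charmatrix] at hroot
    rw [← hroot]
    congr 1
    simp only [Matrix.scalar, Algebra.algebraMap_eq_smul_one, Polynomial.eval_sub,
      Polynomial.eval_X, Polynomial.eval_C, RingHom.mapMatrix_apply]
    ext a b
    simp [Matrix.diagonal_apply, Matrix.one_apply]
  obtain ⟨v, hv0, hveq⟩ := (Matrix.exists_mulVec_eq_zero_iff).mpr hdet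
  refine ⟨v, hv0, ?_⟩
  have := hveq
  rw [Matrix.sub_mulVec, sub_eq_zero, Matrix.smul_mulVec, Matrix.one_mulVec] at this
  exact this.symm

private lemma sum_perm_Iio_le {n : ℕ} (m : Fin n → ℝ)
    (hord : ∀ a b : Fin n, a ≤ b → m b ≤ m a) (σ : Equiv.Perm (Fin n)) (i : Fin n) :
    ∑ s ∈ Finset.Iio i, m (σ s) ≤ ∑ k ∈ Finset.Iio i, m k := by
  classical
  set T : Finset (Fin n) := (Finset.Iio i).image σ with hT
  have hcard : T.card = i.1 := by
    rw [hT, Finset.card_image_of_injective _ σ.injective, Fin.card_Iio]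
  have h1 : ∑ s ∈ Finset.Iio i, m (σ s) = ∑ j ∈ T, m j :=
    (Finset.sum_image (fun a _ b _ h => σ.injective h)).symm
  rw [h1]
  -- enumerate T
  have e := T.orderEmbOfFin hcard
  have h2 : ∑ j ∈ T, m j = ∑ s : Fin i.1, m (T.orderEmbOfFin hcard s) := by
    rw [← Finset.sum_image (fun a _ b _ h => (T.orderEmbOfFin hcard).injective h)]
    congr 1
    ext j
    simp only [Finset.mem_image, Finset.mem_univ, true_and]
    constructor
    · intro hj
      have : j ∈ Set.range (T.orderEmbOfFin hcard) := by
        rw [Finset.range_orderEmbOfFin]; exact hj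
      obtain ⟨s, hs⟩ := this; exact ⟨s, hs⟩
    · rintro ⟨s, rfl⟩; exact Finset.orderEmbOfFin_mem T hcard s
  have h3 : ∑ k ∈ Finset.Iio i, m k = ∑ s : Fin i.1, m (Fin.castLE i.isLt.le s) := by
    rw [← Finset.sum_image (f := m) (g := Fin.castLE i.isLt.le)
      (fun a _ b _ h => Fin.castLE_injective _ h)]
    congr 1
    ext j
    simp only [Finset.mem_image, Finset.mem_univ, true_and, Finset.mem_Iio]
    constructor
    · intro hj
      exact ⟨⟨j.1, hj⟩, by ext; simp⟩
    · rintro ⟨s, rfl⟩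
      simpa [Fin.lt_def] using s.isLt
  rw [h2, h3]
  apply Finset.sum_le_sum
  intro s _
  apply hord
  rw [Fin.le_def]
  simp only [Fin.coe_castLE]
  -- s.1 ≤ (orderEmbOfFin s).1
  have hsm : StrictMono (fun t : Fin i.1 => ((T.orderEmbOfFin hcard t : Fin n) : ℕ)) :=
    fun a b hab => by exact_mod_cast (T.orderEmbOfFin hcard).strictMono hab
  -- prove t.1 ≤ f t by induction
  have key : ∀ j : ℕ, ∀ h : j < i.1, j ≤ ((T.orderEmbOfFin hcard ⟨j, h⟩ : Fin n) : ℕ) := by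
    intro j
    induction j with
    | zero => intro h; exact Nat.zero_le _
    | succ p ih =>
      intro h
      have hp : p < i.1 := by omega
      have h1 := ih hp
      have h2 : ((T.orderEmbOfFin hcard ⟨p, hp⟩ : Fin n) : ℕ) < ((T.orderEmbOfFin hcard ⟨p + 1, h⟩ : Fin n) : ℕ) :=
        hsm (show (⟨p, hp⟩ : Fin i.1) < ⟨p + 1, h⟩ by simp [Fin.lt_def])
      omega
  have := key s.1 s.isLt
  simpa using this

private lemma foldr_max_le {s : Multiset ℝ} {B : ℝ} (h0 : 0 ≤ B) (h : ∀ x ∈ s, x ≤ B) :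
    s.foldr max 0 ≤ B := by
  induction s using Multiset.induction_on with
  | empty => simpa
  | cons a t ih =>
    rw [Multiset.foldr_cons]
    exact max_le (h a (Multiset.mem_cons_self a t))
      (ih fun x hx => h x (Multiset.mem_cons_of_mem hx))


private lemma quad_sqrt {r N mi S : ℝ} (hN : 0 < N) (hS : 0 ≤ S) (hr : 0 ≤ r)
    (h : (r + N) * (r - mi) ≤ N * S) :
    r ≤ (mi - N + Real.sqrt ((mi + N) ^ 2 + 4 * N * S)) / 2 := by
  have hX : 0 ≤ (mi + N) ^ 2 + 4 * N * S := by positivity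
  by_cases h2 : 2 * r + N - mi ≤ 0
  · have := Real.sqrt_nonneg ((mi + N) ^ 2 + 4 * N * S); linarith
  · push_neg at h2
    have hsq : (2 * r + N - mi) ^ 2 ≤ (mi + N) ^ 2 + 4 * N * S := by nlinarith
    have h3 := Real.sqrt_le_sqrt hsq
    rw [Real.sqrt_sq (by linarith)] at h3
    linarith


private lemma core {n : ℕ} (m : Fin n → ℝ)
    (hord : ∀ a b : Fin n, a ≤ b → m b ≤ m a)
    (N : ℝ) (hN0 : 0 < N)
    (r : ℝ) (hr : 0 ≤ r)
    (y : Fin n → ℝ) (hy0 : ∀ k, 0 ≤ y k) (hyne : ∃ k, y k ≠ 0)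
    (c : Fin n → Fin n → ℝ)
    (hc0 : ∀ j k, 0 ≤ c j k) (hcd : ∀ j, c j j = 0) (hcN : ∀ j k, c j k ≤ N)
    (hrow : ∀ j, ∑ k, c j k = m j)
    (heig : ∀ j, r * y j ≤ ∑ k, c j k * y k) :
    ∀ i : Fin n, (r + N) * (r - m i) ≤ N * ∑ k ∈ Finset.Iio i, (m k - m i) := by
  classical
  obtain ⟨k0, hk0⟩ := hyne
  have hnpos : 0 < n := k0.pos
  set σ : Equiv.Perm (Fin n) := Tuple.sort (fun s => -y s) with hσ
  have hmono : Monotone ((fun s => -y s) ∘ σ) := Tuple.monotone_sort _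
  set w : Fin n → ℝ := fun t => y (σ t) with hw
  have hwa : ∀ {a b : Fin n}, a ≤ b → w b ≤ w a := by
    intro a b hab
    have := hmono hab
    simp only [Function.comp_apply, neg_le_neg_iff] at this
    exact this
  have hw0 : ∀ k, 0 ≤ w k := fun k => hy0 _
  set z0 : Fin n := ⟨0, hnpos⟩ with hz0
  have hytop : ∀ k, y k ≤ w z0 := by
    intro k
    have : y k = w (σ.symm k) := by simp [hw]
    rw [this]
    exact hwa (by rw [Fin.le_def]; exact Nat.zero_le _)
  have hwtop : ∀ t, w t ≤ w z0 := fun t => hytop (σ t)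
  have hw0pos : 0 < w z0 := lt_of_lt_of_le (lt_of_le_of_ne (hy0 k0) (Ne.symm hk0)) (hytop k0)
  -- the row inequality
  have hrowI : ∀ t i : Fin n, r * w t ≤ m (σ t) * w i
      + N * ∑ u ∈ (Finset.Iio i).erase t, (w u - w i) := by
    intro t i
    have h1 : r * w t ≤ ∑ k, c (σ t) k * y k := heig (σ t)
    set j := σ t with hj
    have hsum : ∑ k, c j k * y k = m j * w i + ∑ k, c j k * (y k - w i) := by
      rw [← hrow j, Finset.sum_mul, ← Finset.sum_add_distrib]
      exact Finset.sum_congr rfl (fun k _ => by ring)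
    set P : Finset (Fin n) := ((Finset.Iio i).erase t).image σ with hP
    have hbound : ∀ k : Fin n, c j k * (y k - w i) ≤ if k ∈ P then N * (y k - w i) else 0 := by
      intro k
      by_cases hk : k ∈ P
      · simp only [hk, if_true]
        obtain ⟨u, hu, rfl⟩ := Finset.mem_image.mp hk
        have hui : u ∈ Finset.Iio i := Finset.mem_of_mem_erase hu
        have hwu : w i ≤ y (σ u) := hwa (le_of_lt (Finset.mem_Iio.mp hui))
        exact mul_le_mul_of_nonneg_right (hcN j (σ u)) (sub_nonneg.mpr hwu)
      · simp only [hk, if_false]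
        by_cases hut : σ.symm k = t
        · have hkj : k = j := by rw [hj, ← hut, σ.apply_symm_apply]
          rw [hkj, hcd j]; simp
        · have hui : ¬ σ.symm k < i := by
            intro hlt
            exact hk (Finset.mem_image.mpr ⟨σ.symm k,
              Finset.mem_erase.mpr ⟨hut, Finset.mem_Iio.mpr hlt⟩, σ.apply_symm_apply k⟩)
          have hyk : y k ≤ w i := by
            have : y k = w (σ.symm k) := by simp [hw]
            rw [this]
            exact hwa (le_of_not_gt hui)
          exact mul_nonpos_of_nonneg_of_nonpos (hc0 j k) (sub_nonpos.mpr hyk)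
    calc r * w t ≤ ∑ k, c j k * y k := h1
      _ = m j * w i + ∑ k, c j k * (y k - w i) := hsum
      _ ≤ m j * w i + ∑ k, (if k ∈ P then N * (y k - w i) else 0) :=
          add_le_add_right (Finset.sum_le_sum fun k _ => hbound k) _
      _ = m j * w i + ∑ k ∈ P, N * (y k - w i) := by
          rw [Finset.sum_ite_mem, Finset.univ_inter]
      _ = m j * w i + N * ∑ u ∈ (Finset.Iio i).erase t, (w u - w i) := by
          rw [Finset.sum_image (fun a _ b _ h => σ.injective h), Finset.mul_sum]
  -- main induction
  suffices key : ∀ q : ℕ, ∀ i : Fin n, i.1 = q →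
      (r + N) * (r - m i) ≤ N * ∑ k ∈ Finset.Iio i, (m k - m i) by
    intro i; exact key i.1 i rfl
  intro q
  induction q with
  | zero =>
    intro i hi
    have hIio : Finset.Iio i = ∅ := by
      ext k
      simp only [Finset.mem_Iio, Finset.notMem_empty, iff_false]
      intro hk; rw [Fin.lt_def, hi] at hk; omega
    rw [hIio, Finset.sum_empty, mul_zero]
    have h1 := hrowI i i
    rw [hIio] at h1
    simp only [Finset.erase_empty, Finset.sum_empty, mul_zero, add_zero] at h1
    have hmi : m (σ i) ≤ m i := hord i (σ i) (by rw [Fin.le_def, hi]; omega)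
    have hwipos : 0 < w i := by
      have hiz : i = z0 := by
        apply Fin.ext; rw [hi, hz0]
      rw [hiz]; exact hw0pos
    have hrm : r ≤ m i := by
      have h2 := le_trans h1 (mul_le_mul_of_nonneg_right hmi (hw0 i))
      exact le_of_mul_le_mul_right h2 hwipos
    exact mul_nonpos_of_nonneg_of_nonpos (by linarith) (by linarith)
  | succ p ih =>
    intro i hi
    have hpn : p < n := by have := i.isLt; omega
    set i' : Fin n := ⟨p, hpn⟩ with hi'
    have hi'lt : i' < i := by rw [Fin.lt_def, hi]; simp [hi']
    have hIio : Finset.Iio i = insert i' (Finset.Iio i') := by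
      ext k
      simp only [Finset.mem_Iio, Finset.mem_insert, Fin.lt_def, hi, hi', Fin.ext_iff]
      omega
    have hmem : i' ∉ Finset.Iio i' := by simp
    have hcard' : (Finset.Iio i').card = p := by rw [Fin.card_Iio]
    have hcard : (Finset.Iio i).card = p + 1 := by rw [Fin.card_Iio, hi]
    have hmii' : m i ≤ m i' := hord i' i hi'lt.le
    by_cases hcase : r ≤ (p : ℝ) * N
    · have hih := ih i' rfl
      have hs1 : ∑ k ∈ Finset.Iio i, (m k - m i)
          = (∑ k ∈ Finset.Iio i', (m k - m i')) + ((p : ℝ) + 1) * (m i' - m i) := by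
        rw [hIio, Finset.sum_insert hmem]
        rw [Finset.sum_congr rfl (fun k _ => (by ring : m k - m i = (m k - m i') + (m i' - m i))),
          Finset.sum_add_distrib, Finset.sum_const, hcard']
        push_cast; ring
      rw [hs1]
      have hd : 0 ≤ m i' - m i := by linarith
      have hkey : (r + N) * (m i' - m i) ≤ ((p : ℝ) + 1) * N * (m i' - m i) := by
        apply mul_le_mul_of_nonneg_right _ hd
        nlinarith
      nlinarith [hih]
    · push_neg at hcase
      set W := ∑ s ∈ Finset.Iio i, w s with hW
      set K := ∑ k ∈ Finset.Iio i, m k with hK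
      have hKs : ∑ s ∈ Finset.Iio i, m (σ s) ≤ K := sum_perm_Iio_le m hord σ i
      have hz0mem : z0 ∈ Finset.Iio i := by
        simp only [Finset.mem_Iio, Fin.lt_def, hz0, hi]; omega
      by_cases hwi : w i = 0
      · exfalso
        have h1 := hrowI z0 i
        rw [hwi] at h1
        have h2 : ∑ u ∈ (Finset.Iio i).erase z0, (w u - 0) ≤ (p : ℝ) * w z0 := by
          calc ∑ u ∈ (Finset.Iio i).erase z0, (w u - 0)
              ≤ ∑ _u ∈ (Finset.Iio i).erase z0, w z0 :=
                Finset.sum_le_sum (fun u _ => by simpa using hwtop u)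
            _ = (((Finset.Iio i).erase z0).card : ℝ) * w z0 := by
                rw [Finset.sum_const, nsmul_eq_mul]
            _ = (p : ℝ) * w z0 := by
                rw [Finset.card_erase_of_mem hz0mem, hcard]; norm_num
        have h3 : r * w z0 ≤ N * ((p : ℝ) * w z0) := by
          calc r * w z0 ≤ m (σ z0) * 0 + N * ∑ u ∈ (Finset.Iio i).erase z0, (w u - 0) := h1
            _ = N * ∑ u ∈ (Finset.Iio i).erase z0, (w u - 0) := by ring
            _ ≤ N * ((p : ℝ) * w z0) := mul_le_mul_of_nonneg_left h2 hN0.le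
        nlinarith [hw0pos]
      · have hwipos : 0 < w i := lt_of_le_of_ne (hw0 i) (Ne.symm hwi)
        have hS : ∑ u ∈ Finset.Iio i, (w u - w i) = W - ((p : ℝ) + 1) * w i := by
          rw [Finset.sum_sub_distrib, Finset.sum_const, hcard, nsmul_eq_mul]
          push_cast; ring
        obtain ⟨t, hti, hσt⟩ : ∃ t : Fin n, t ≤ i ∧ i ≤ σ t := by
          by_contra hno
          push_neg at hno
          have hmaps : ∀ t ∈ Finset.Iic i, σ t ∈ Finset.Iio i := by
            intro t ht
            exact Finset.mem_Iio.mpr (hno t (Finset.mem_Iic.mp ht))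
          have := Finset.card_le_card_of_injOn σ hmaps
            (fun a _ b _ h => σ.injective h)
          rw [Fin.card_Iic, Fin.card_Iio] at this
          omega
        have hII : r * w i ≤ m i * w i + N * (W - ((p : ℝ) + 1) * w i) := by
          have h1 : r * w i ≤ r * w t := mul_le_mul_of_nonneg_left (hwa hti) hr
          have h2 := hrowI t i
          have h3 : m (σ t) * w i ≤ m i * w i :=
            mul_le_mul_of_nonneg_right (hord i (σ t) hσt) (hw0 i)
          have h4 : ∑ u ∈ (Finset.Iio i).erase t, (w u - w i)
              ≤ ∑ u ∈ Finset.Iio i, (w u - w i) := by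
            apply Finset.sum_le_sum_of_subset_of_nonneg (Finset.erase_subset _ _)
            intro u hu _
            exact sub_nonneg.mpr (hwa (le_of_lt (Finset.mem_Iio.mp hu)))
          rw [hS] at h4
          calc r * w i ≤ r * w t := h1
            _ ≤ m (σ t) * w i + N * ∑ u ∈ (Finset.Iio i).erase t, (w u - w i) := h2
            _ ≤ m i * w i + N * (W - ((p : ℝ) + 1) * w i) :=
                add_le_add h3 (mul_le_mul_of_nonneg_left h4 hN0.le)
        have hI : r * W ≤ K * w i + N * ((p : ℝ) * (W - ((p : ℝ) + 1) * w i)) := by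
          have hrows : ∀ s ∈ Finset.Iio i, r * w s ≤ m (σ s) * w i
              + N * ((W - ((p : ℝ) + 1) * w i) - (w s - w i)) := by
            intro s hs
            have h2 := hrowI s i
            rw [Finset.sum_erase_eq_sub hs, hS] at h2
            exact h2
          have hsum2 : ∑ s ∈ Finset.Iio i, (N * ((W - ((p : ℝ) + 1) * w i) - (w s - w i)))
              = N * ((p : ℝ) * (W - ((p : ℝ) + 1) * w i)) := by
            rw [Finset.sum_congr rfl (fun s _ => (by ring :
                N * ((W - ((p : ℝ) + 1) * w i) - (w s - w i))
                = N * (W - ((p : ℝ) + 1) * w i) - N * (w s - w i))),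
              Finset.sum_sub_distrib, Finset.sum_const, hcard, nsmul_eq_mul,
              ← Finset.mul_sum, hS]
            push_cast; ring
          calc r * W = ∑ s ∈ Finset.Iio i, r * w s := by rw [hW, Finset.mul_sum]
            _ ≤ ∑ s ∈ Finset.Iio i, (m (σ s) * w i
                + N * ((W - ((p : ℝ) + 1) * w i) - (w s - w i))) := Finset.sum_le_sum hrows
            _ = (∑ s ∈ Finset.Iio i, m (σ s)) * w i
                + N * ((p : ℝ) * (W - ((p : ℝ) + 1) * w i)) := by
                rw [Finset.sum_add_distrib, ← Finset.sum_mul, hsum2]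
            _ ≤ K * w i + N * ((p : ℝ) * (W - ((p : ℝ) + 1) * w i)) := by
                have := mul_le_mul_of_nonneg_right hKs (hw0 i)
                linarith
        have hfin : (r * (r + N)) * w i ≤ ((r - (p : ℝ) * N) * m i + N * K) * w i := by
          have t1 : (r - (p : ℝ) * N)
              * (r * w i - (m i * w i + N * (W - ((p : ℝ) + 1) * w i))) ≤ 0 :=
            mul_nonpos_of_nonneg_of_nonpos (by linarith) (by linarith)
          have t2 : N * (r * W - (K * w i + N * ((p : ℝ) * (W - ((p : ℝ) + 1) * w i)))) ≤ 0 :=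
            mul_nonpos_of_nonneg_of_nonpos hN0.le (by linarith)
          nlinarith [t1, t2]
        have hPQ : r * (r + N) ≤ (r - (p : ℝ) * N) * m i + N * K :=
          le_of_mul_le_mul_right hfin hwipos
        have hs2 : ∑ k ∈ Finset.Iio i, (m k - m i) = K - ((p : ℝ) + 1) * m i := by
          rw [Finset.sum_sub_distrib, Finset.sum_const, hcard, nsmul_eq_mul, hK]
          push_cast; ring
        rw [hs2]
        nlinarith [hPQ]

end helpers

theorem stmt_8 {n : ℕ} (hn : 2 ≤ n) (G : SimpleGraph (Fin n)) [DecidableRel G.Adj]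
    (hconn : G.Connected) (α : ℝ)
    (m : Fin n → ℝ)
    (hm : ∀ i, m i = (∑ j ∈ G.neighborFinset i, (G.degree j : ℝ) ^ α) / (G.degree i : ℝ) ^ α)
    (hord : ∀ i j : Fin n, i ≤ j → m j ≤ m i)
    (N : ℝ) (hN : IsGreatest {x | ∃ i j, G.Adj i j ∧ x = (G.degree j : ℝ) ^ α / (G.degree i : ℝ) ^ α} N) :
    ∀ i : Fin n, specRad (G.adjMatrix ℝ) ≤
      (m i - N +
        Real.sqrt ((m i + N) ^ 2 + 4 * N * ∑ k ∈ Finset.Iio i, (m k - m i))) / 2 := by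
  intro i
  classical
  -- adjacency from connectivity
  have hadj : ∀ u : Fin n, ∃ x, G.Adj u x := by
    intro u
    obtain ⟨u', hu'⟩ := Fintype.exists_ne_of_one_lt_card (by simp; omega) u
    obtain ⟨pw⟩ := hconn.preconnected u u'
    cases pw with
    | nil => exact absurd rfl (Ne.symm hu')
    | cons h _ => exact ⟨_, h⟩
  have hdeg : ∀ u : Fin n, 0 < G.degree u := by
    intro u
    rw [SimpleGraph.degree_pos_iff_exists_adj]
    exact hadj u
  set d : Fin n → ℝ := fun u => ((G.degree u : ℝ) ^ α) with hd
  have hdpos : ∀ u, 0 < d u := by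
    intro u
    exact Real.rpow_pos_of_pos (by exact_mod_cast hdeg u) α
  -- N is positive
  have hN0 : 0 < N := by
    obtain ⟨b, hb⟩ := hadj i
    have hmem : d b / d i ∈ {x | ∃ a b, G.Adj a b ∧ x = (G.degree b : ℝ) ^ α / (G.degree a : ℝ) ^ α} :=
      ⟨i, b, hb, rfl⟩
    have := hN.2 hmem
    have : 0 < d b / d i := div_pos (hdpos b) (hdpos i)
    linarith [hN.2 hmem]
  -- m is nonneg
  have hm0 : ∀ u, 0 ≤ m u := by
    intro u
    rw [hm u]
    apply div_nonneg _ (hdpos u).le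
    exact Finset.sum_nonneg fun j _ => (Real.rpow_nonneg (Nat.cast_nonneg _) α)
  have hSnn : 0 ≤ ∑ k ∈ Finset.Iio i, (m k - m i) := by
    apply Finset.sum_nonneg
    intro k hk
    exact sub_nonneg.mpr (hord k i (le_of_lt (Finset.mem_Iio.mp hk)))
  -- the bound is nonnegative
  have hBnn : 0 ≤ (m i - N + Real.sqrt ((m i + N) ^ 2 + 4 * N * ∑ k ∈ Finset.Iio i, (m k - m i))) / 2 := by
    have h1 : Real.sqrt ((m i + N) ^ 2) ≤
        Real.sqrt ((m i + N) ^ 2 + 4 * N * ∑ k ∈ Finset.Iio i, (m k - m i)) := by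
      apply Real.sqrt_le_sqrt
      nlinarith [hSnn, hN0]
    rw [Real.sqrt_sq (by linarith [hm0 i] : (0:ℝ) ≤ m i + N)] at h1
    linarith [hm0 i]
  -- reduce to roots
  rw [specRad]
  apply foldr_max_le hBnn
  intro x hx
  obtain ⟨μ, hμroot, rfl⟩ := Multiset.mem_map.mp hx
  -- eigenvector
  obtain ⟨v, hv0, hveq⟩ := exists_eigenvec _ hμroot
  set r : ℝ := ‖μ‖ with hr
  set y : Fin n → ℝ := fun k => ‖v k‖ / d k with hy
  set c : Fin n → Fin n → ℝ := fun j k => if G.Adj j k then d k / d j else 0 with hc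
  have hy0 : ∀ k, 0 ≤ y k := fun k => div_nonneg (norm_nonneg _) (hdpos k).le
  have hyne : ∃ k, y k ≠ 0 := by
    obtain ⟨k, hk⟩ := Function.ne_iff.mp hv0
    refine ⟨k, ?_⟩
    have : 0 < ‖v k‖ := by
      simpa using norm_pos_iff.mpr hk
    exact ne_of_gt (div_pos this (hdpos k))
  have hc0 : ∀ j k, 0 ≤ c j k := by
    intro j k
    rw [hc]
    dsimp only
    split
    · exact div_nonneg (hdpos k).le (hdpos j).le
    · exact le_refl 0
  have hcd : ∀ j, c j j = 0 := by
    intro j; rw [hc]; simp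
  have hcN : ∀ j k, c j k ≤ N := by
    intro j k
    rw [hc]
    dsimp only
    split
    · exact hN.2 ⟨j, k, ‹_›, rfl⟩
    · exact hN0.le
  have hrow : ∀ j, ∑ k, c j k = m j := by
    intro j
    have h1 : ∑ k, c j k = ∑ k ∈ G.neighborFinset j, d k / d j := by
      rw [hc]
      dsimp only
      rw [← Finset.sum_filter]
      congr 1
      ext k
      simp [SimpleGraph.mem_neighborFinset]
    rw [h1, ← Finset.sum_div, hm j]
  have heig : ∀ j, r * y j ≤ ∑ k, c j k * y k := by
    intro j
    have h1 : μ * v j = ∑ k, (if G.Adj j k then (1:ℂ) else 0) * v k := by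
      have h0 := congrFun hveq j
      rw [Matrix.mulVec, dotProduct] at h0
      simp only [Matrix.map_apply, SimpleGraph.adjMatrix_apply, Pi.smul_apply,
        smul_eq_mul, apply_ite Complex.ofReal, Complex.ofReal_one, Complex.ofReal_zero] at h0
      rw [← h0]
    have h2 : r * ‖v j‖ ≤ ∑ k, (if G.Adj j k then ‖v k‖ else 0) := by
      calc r * ‖v j‖ = ‖μ * v j‖ := (norm_mul μ (v j)).symm
        _ = ‖∑ k, (if G.Adj j k then (1:ℂ) else 0) * v k‖ := by rw [h1]
        _ ≤ ∑ k, ‖(if G.Adj j k then (1:ℂ) else 0) * v k‖ :=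
            norm_sum_le _ _
        _ = ∑ k, (if G.Adj j k then ‖v k‖ else 0) := by
            apply Finset.sum_congr rfl
            intro k _
            rw [norm_mul]
            split
            · rw [norm_one, one_mul]
            · rw [norm_zero, zero_mul]
    calc r * y j = (r * ‖v j‖) / d j := by rw [hy]; dsimp only; ring
      _ ≤ (∑ k, (if G.Adj j k then ‖v k‖ else 0)) / d j :=
          (div_le_div_iff_of_pos_right (hdpos j)).mpr h2
      _ = ∑ k, (if G.Adj j k then ‖v k‖ else 0) / d j := Finset.sum_div _ _ _
      _ = ∑ k, c j k * y k := by
          apply Finset.sum_congr rfl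
          intro k _
          rw [hc, hy]
          dsimp only
          split
          · rw [div_mul_div_comm]
            rw [mul_comm (d k) (‖v k‖), mul_div_mul_right _ _ (ne_of_gt (hdpos k))]
          · simp
  have hcore := core m hord N hN0 r (norm_nonneg μ) y hy0 hyne c hc0 hcd hcN hrow heig i
  exact quad_sqrt hN0 hSnn (norm_nonneg μ) hcore
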